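/- arXiv:2303.16525 — 2 statements merged into one kernel-verified Lean document; each statement's English description precedes it below -/
import Mathlib

section
/- Suppose ξ(·) = (ξ_α(·))_{α∈ℕⁿ} is a functional-valued map on a domain D ⊆ ℂᵐ that is locally uniformly bounded near w₀ ∈ D (i.e., for each ρ > 0 there is a neighborhood V of w₀ with sup_{w∈V} ∑_α |ξ_α(w)| ρ^{|α|} < ∞) and each ξ_α is continuous at w₀. Let V be an open set compactly contained in the z-domain, z_j ∈ V with (z_j, w_j) → (z₀, w₀), and let f_j be holomorphic functions converging compactly (uniformly on compact subsets) to f on V. Then (ξ(w_j)·f_j)(z_j) → (ξ(w₀)·f)(z₀) as j → ∞. -/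
open MeasureTheory Filter Topology Complex
open scoped ENNReal
noncomputable section

/-- The total degree `|α|` of a multi-index. -/
def mdeg {n : ℕ} (α : Fin n → ℕ) : ℕ := ∑ i, α i

/-- The factorial `α!` of a multi-index. -/
def mfact {n : ℕ} (α : Fin n → ℕ) : ℕ := ∏ i, Nat.factorial (α i)

/-- Partial derivative in the `i`-th coordinate direction. -/
def pderivC {n : ℕ} (i : Fin n) (f : (Fin n → ℂ) → ℂ) : (Fin n → ℂ) → ℂ :=
  fun z => deriv (fun t : ℂ => f (Function.update z i t)) (z i)

/-- Iterated partial derivative `∂^{|α|} f / ∂z^α`. -/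
def multiDeriv {n : ℕ} (α : Fin n → ℕ) (f : (Fin n → ℂ) → ℂ) : (Fin n → ℂ) → ℂ :=
  (List.finRange n).foldr (fun i g => (pderivC i)^[α i] g) f

/-- Membership in `ℓ₁^{(n)}`: `∑_α |ξ_α| ρ^{|α|} < ∞` for every `ρ > 0`. -/
def MemL1 {n : ℕ} (ξ : (Fin n → ℕ) → ℂ) : Prop :=
  ∀ ρ : ℝ, 0 < ρ → Summable fun α : Fin n → ℕ => ‖ξ α‖ * ρ ^ mdeg α

/-- The action `(ξ·f)(z) = ∑_α ξ_α f^{(α)}(z)/α!`. -/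
def xiAct {n : ℕ} (ξ : (Fin n → ℕ) → ℂ) (f : (Fin n → ℂ) → ℂ) (z : Fin n → ℂ) : ℂ :=
  ∑' α : Fin n → ℕ, ξ α * multiDeriv α f z / (mfact α : ℂ)

/-- Plurisubharmonicity of an `EReal`-valued function on a set: upper semicontinuity
together with the sub-mean value inequality on every complex circle whose closed disc
is contained in the set (expressed via integrable real-valued majorants). -/
def PlurisubharmonicOn {E : Type*} [NormedAddCommGroup E] [NormedSpace ℂ E]
    (f : E → EReal) (s : Set E) : Prop :=
  UpperSemicontinuousOn f s ∧
  ∀ z ∈ s, ∀ v : E, (∀ t : ℂ, ‖t‖ ≤ 1 → z + t • v ∈ s) →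
    ∀ g : ℝ → ℝ, IntervalIntegrable g volume 0 (2 * Real.pi) →
      (∀ θ : ℝ, f (z + Complex.exp (θ * Complex.I) • v) ≤ (g θ : EReal)) →
      f z ≤ (((2 * Real.pi)⁻¹ * ∫ θ in (0:ℝ)..(2 * Real.pi), g θ : ℝ) : EReal)

/-- The weighted `L²` integral `∫_D |f|² e^{-ψ}`. -/
def wL2 {n : ℕ} (D : Set (Fin n → ℂ)) (ψ : (Fin n → ℂ) → ℝ) (f : (Fin n → ℂ) → ℂ) : ℝ≥0∞ :=
  ∫⁻ z in D, ENNReal.ofReal (‖f z‖ ^ 2 * Real.exp (-ψ z))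

/-- Membership in the weighted Bergman space `A²(D, e^{-ψ})`. -/
def MemA2 {n : ℕ} (D : Set (Fin n → ℂ)) (ψ : (Fin n → ℂ) → ℝ) (f : (Fin n → ℂ) → ℂ) : Prop :=
  DifferentiableOn ℂ f D ∧ wL2 D ψ f < ⊤

/-- The weighted `ξ`-Bergman kernel `K^ψ_{ξ,D}(z)`. -/
def xiBergman {n : ℕ} (ξ : (Fin n → ℕ) → ℂ) (D : Set (Fin n → ℂ))
    (ψ : (Fin n → ℂ) → ℝ) (z : Fin n → ℂ) : ℝ≥0∞ :=
  ⨆ f : {f // MemA2 D ψ f}, ENNReal.ofReal (‖xiAct ξ f.1 z‖ ^ 2) / wL2 D ψ f.1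

/-- The locally uniformly bounded property for a functional-valued function on `D`. -/
def LocUnifBdd {n m : ℕ} (ξ : (Fin m → ℂ) → (Fin n → ℕ) → ℂ) (D : Set (Fin m → ℂ)) : Prop :=
  ∀ w ∈ D, ∀ ρ : ℝ, 0 < ρ → ∃ V ∈ 𝓝 w, ∃ C : ℝ,
    ∀ w' ∈ V ∩ D, (∑' α : Fin n → ℕ, ENNReal.ofReal (‖ξ w' α‖ * ρ ^ mdeg α)) ≤ ENNReal.ofReal C


lemma choose_le_two_pow (m j : ℕ) : m.choose j ≤ 2 ^ m := by
  rcases le_or_gt j m with h | h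
  · calc m.choose j ≤ ∑ i ∈ Finset.range (m+1), m.choose i :=
        Finset.single_le_sum (fun i _ => Nat.zero_le _)
          (Finset.mem_range.2 (Nat.lt_succ_of_le h))
    _ = 2 ^ m := Nat.sum_range_choose m
  · simp [Nat.choose_eq_zero_of_lt h]

lemma factorial_mdeg_le : ∀ {n : ℕ} (α : Fin n → ℕ),
    (mdeg α).factorial ≤ 2 ^ (n * mdeg α) * mfact α := by
  intro n
  induction n with
  | zero => intro α; simp [mdeg, mfact]
  | succ n ih =>
    intro α
    set a := α 0
    set β := fun i : Fin n => α i.succ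
    have hdeg : mdeg α = a + mdeg β := by
      simp [mdeg, Fin.sum_univ_succ]; rfl
    have hfact : mfact α = a.factorial * mfact β := by
      simp [mfact, Fin.prod_univ_succ]; rfl
    have key : (a + mdeg β).factorial
        = (a + mdeg β).choose (mdeg β) * a.factorial * (mdeg β).factorial :=
      (Nat.add_choose_mul_factorial_mul_factorial a (mdeg β)).symm
    rw [hdeg, hfact, key]
    calc (a + mdeg β).choose (mdeg β) * a.factorial * (mdeg β).factorial
        ≤ 2 ^ (a + mdeg β) * a.factorial * (2 ^ (n * mdeg β) * mfact β) :=
          Nat.mul_le_mul (Nat.mul_le_mul_right _ (choose_le_two_pow _ _)) (ih β)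
      _ ≤ 2 ^ ((n+1) * (a + mdeg β)) * (a.factorial * mfact β) := by
          have hexp : 2 ^ ((n+1) * (a + mdeg β)) = 2 ^ (a + mdeg β) * 2 ^ (n * (a + mdeg β)) := by
            rw [← pow_add]; ring_nf
          rw [hexp]
          have h2 : (2:ℕ) ^ (n * mdeg β) ≤ 2 ^ (n * (a + mdeg β)) :=
            Nat.pow_le_pow_right (by norm_num) (Nat.mul_le_mul_left _ (Nat.le_add_left _ _))
          calc 2 ^ (a + mdeg β) * a.factorial * (2 ^ (n * mdeg β) * mfact β)
              ≤ 2 ^ (a + mdeg β) * a.factorial * (2 ^ (n * (a + mdeg β)) * mfact β) :=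
                Nat.mul_le_mul_left _ (Nat.mul_le_mul_right _ h2)
            _ = 2 ^ (a + mdeg β) * 2 ^ (n * (a + mdeg β)) * (a.factorial * mfact β) := by ring
  
lemma pow_self_le : ∀ k : ℕ, (k : ℝ) ^ k ≤ 3 ^ k * k.factorial := by
  intro k
  induction k with
  | zero => norm_num
  | succ k ih =>
    have h1 : ((k:ℝ) + 1) ^ k ≤ 3 * (k:ℝ) ^ k := by
      rcases Nat.eq_zero_or_pos k with rfl | hk
      · norm_num
      · have hkpos : (0:ℝ) < k := by exact_mod_cast hk
        have he : ((k:ℝ) + 1) = k * (1 + 1/k) := by field_simp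
        rw [he, mul_pow]
        have h2 : (1 + 1/(k:ℝ)) ^ k ≤ 3 := by
          have h3 : (1 + 1/(k:ℝ)) ≤ Real.exp (1/k) := by
            simpa [add_comm] using Real.add_one_le_exp (1/(k:ℝ))
          calc (1 + 1/(k:ℝ)) ^ k ≤ (Real.exp (1/k)) ^ k := by
                apply pow_le_pow_left₀ (by positivity) h3 _
            _ = Real.exp (k * (1/k)) := (Real.exp_nat_mul _ _).symm
            _ = Real.exp 1 := by rw [mul_one_div, div_self hkpos.ne']
            _ ≤ 3 := by
                have := Real.exp_one_lt_d9
                linarith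
        calc (k:ℝ) ^ k * (1 + 1/(k:ℝ)) ^ k ≤ (k:ℝ) ^ k * 3 :=
              mul_le_mul_of_nonneg_left h2 (by positivity)
          _ = 3 * (k:ℝ) ^ k := by ring
    have hc : ((k:ℝ) + 1) ^ (k+1) = ((k:ℝ)+1) * ((k:ℝ)+1) ^ k := by ring
    push_cast
    rw [hc]
    calc ((k:ℝ)+1) * ((k:ℝ)+1) ^ k ≤ ((k:ℝ)+1) * (3 * (k:ℝ)^k) :=
          mul_le_mul_of_nonneg_left h1 (by positivity)
      _ ≤ ((k:ℝ)+1) * (3 * (3^k * k.factorial)) := by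
          have : (3:ℝ) * (k:ℝ)^k ≤ 3 * (3^k * k.factorial) := by
            have := ih; nlinarith [ih]
          exact mul_le_mul_of_nonneg_left this (by positivity)
      _ = 3 ^ (k+1) * (((k:ℝ)+1) * k.factorial) := by ring
      _ = 3 ^ (k+1) * ((k+1).factorial) := by
          rw [Nat.factorial_succ]; push_cast; ring

/-- The key combinatorial estimate: `k^k / α! ≤ (3·2^n)^k` where `k = |α|`. -/
lemma mdeg_pow_le {n : ℕ} (α : Fin n → ℕ) :
    ((mdeg α : ℝ)) ^ (mdeg α) ≤ (3 * 2^n) ^ (mdeg α) * (mfact α : ℝ) := by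
  set k := mdeg α
  have h1 : ((k:ℝ)) ^ k ≤ 3 ^ k * k.factorial := pow_self_le k
  have h2 : (k.factorial : ℝ) ≤ 2 ^ (n * k) * (mfact α : ℝ) := by
    exact_mod_cast factorial_mdeg_le α
  calc ((k:ℝ)) ^ k ≤ 3 ^ k * k.factorial := h1
    _ ≤ 3 ^ k * (2 ^ (n * k) * mfact α) :=
        mul_le_mul_of_nonneg_left h2 (by positivity)
    _ = (3 * 2^n) ^ k * (mfact α : ℝ) := by
        rw [mul_pow, ← pow_mul]; ring

lemma update_eq_add_smul {n : ℕ} (z : Fin n → ℂ) (i : Fin n) (t : ℂ) :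
    Function.update z i t = z + (t - z i) • (Pi.single i (1:ℂ) : Fin n → ℂ) := by
  funext j
  by_cases h : j = i
  · subst h; simp
  · simp [Function.update_of_ne h, Pi.single_eq_of_ne h]

lemma add_single_eq_update {n : ℕ} (z : Fin n → ℂ) (i : Fin n) (a : ℂ) :
    z + a • (Pi.single i (1:ℂ) : Fin n → ℂ) = Function.update z i (z i + a) := by
  rw [update_eq_add_smul]; simp

lemma continuous_updateFn {n : ℕ} (z : Fin n → ℂ) (i : Fin n) :
    Continuous fun t : ℂ => Function.update z i t := by
  have : (fun t : ℂ => Function.update z i t)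
      = fun t : ℂ => z + (t - z i) • (Pi.single i (1:ℂ) : Fin n → ℂ) := funext fun t => update_eq_add_smul z i t
  rw [this]
  exact continuous_const.add ((continuous_id.sub continuous_const).smul continuous_const)

lemma differentiable_updateFn {n : ℕ} (z : Fin n → ℂ) (i : Fin n) :
    Differentiable ℂ fun t : ℂ => Function.update z i t := by
  have : (fun t : ℂ => Function.update z i t)
      = fun t : ℂ => z + (t - z i) • (Pi.single i (1:ℂ) : Fin n → ℂ) := funext fun t => update_eq_add_smul z i t
  rw [this]
  exact (((differentiable_id.sub_const _).smul_const _).const_add _)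

lemma dist_update_le {n : ℕ} (x z : Fin n → ℂ) (i : Fin n) (t : ℂ) :
    dist (Function.update x i t) z ≤ max (dist x z) (dist t (z i)) := by
  refine (dist_pi_le_iff (le_max_of_le_left dist_nonneg)).2 fun j => ?_
  by_cases h : j = i
  · subst h; simpa using le_max_right _ _
  · rw [Function.update_of_ne h]
    exact le_max_of_le_left (dist_le_pi_dist x z j)

/-- A function is `Good` on `U` if it is continuous there and all its one-variable
slices are holomorphic. -/
def Good {n : ℕ} (U : Set (Fin n → ℂ)) (h : (Fin n → ℂ) → ℂ) : Prop :=
  ContinuousOn h U ∧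
    ∀ z ∈ U, ∀ i, DifferentiableAt ℂ (fun t => h (Function.update z i t)) (z i)

lemma Good.slice_diffOn {n : ℕ} {U : Set (Fin n → ℂ)} {h : (Fin n → ℂ) → ℂ}
    (hg : Good U h) (z : Fin n → ℂ) (i : Fin n) :
    DifferentiableOn ℂ (fun t => h (Function.update z i t))
      {t | Function.update z i t ∈ U} := by
  intro t ht
  have h2 := hg.2 (Function.update z i t) ht i
  simp only [Function.update_idem, Function.update_self] at h2
  exact h2.differentiableWithinAt

lemma good_of_diff {n : ℕ} {U : Set (Fin n → ℂ)} {h : (Fin n → ℂ) → ℂ}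
    (hU : IsOpen U) (hd : DifferentiableOn ℂ h U) : Good U h := by
  refine ⟨hd.continuousOn, fun z hz i => ?_⟩
  have h1 : DifferentiableAt ℂ h (Function.update z i (z i)) := by
    rw [Function.update_eq_self]
    exact hd.differentiableAt (hU.mem_nhds hz)
  exact h1.comp (z i) ((differentiable_updateFn z i) (z i))

/-- Quantitative second-order Taylor estimate at the center of a disc. -/
lemma taylor2 {φ : ℂ → ℂ} {c : ℂ} {R M : ℝ} (hR : 0 < R) (hM : 0 ≤ M)
    (hd : DifferentiableOn ℂ φ (Metric.closedBall c R))
    (hb : ∀ t ∈ Metric.closedBall c R, ‖φ t‖ ≤ M)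
    {η : ℂ} (hη : ‖η‖ ≤ R / 2) :
    ‖φ (c + η) - φ c - η * deriv φ c‖ ≤ 2 * M * ‖η‖ ^ 2 / R ^ 2 := by
  lift R to NNReal using hR.le with R' hR'
  have hRpos : (0:ℝ) < R' := hR
  have hdc : DiffContOnCl ℂ φ (Metric.ball c R') := by
    apply DifferentiableOn.diffContOnCl
    rwa [closure_ball c hRpos.ne']
  have H := hdc.hasFPowerSeriesOnBall (by exact_mod_cast hRpos)
  set p := cauchyPowerSeries φ c R' with hp
  have hηR : ‖η‖ < R' := lt_of_le_of_lt hη (by linarith)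
  have hmem : η ∈ Metric.eball (0:ℂ) R' := by
    rw [mem_emetric_ball_zero_iff]
    exact_mod_cast hηR
  have hsum : HasSum (fun k : ℕ => η ^ k • p.coeff k) (φ (c + η)) := by
    have := H.hasSum hmem
    simpa only [p.apply_eq_pow_smul_coeff] using this
  have hcoeff : ∀ k : ℕ, ‖p.coeff k‖ ≤ M / R' ^ k := by
    intro k
    have h1 : ‖p.coeff k‖ ≤ ‖p k‖ := by
      show ‖p k 1‖ ≤ ‖p k‖
      have := (p k).le_opNorm 1
      simpa using this
    have h2 : ‖p k‖ ≤ ((2 * Real.pi)⁻¹ *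
        ∫ θ : ℝ in (0)..2 * Real.pi, ‖φ (circleMap c R' θ)‖) * |(R':ℝ)|⁻¹ ^ k :=
      norm_cauchyPowerSeries_le φ c R' k
    have h3 : (∫ θ : ℝ in (0)..2 * Real.pi, ‖φ (circleMap c R' θ)‖) ≤ M * (2 * Real.pi) := by
      have h4 : ‖∫ θ : ℝ in (0)..2 * Real.pi, ‖φ (circleMap c R' θ)‖‖ ≤
          M * |2 * Real.pi - 0| := by
        apply intervalIntegral.norm_integral_le_of_norm_le_const
        intro θ _
        rw [norm_norm]
        exact hb _ (Metric.sphere_subset_closedBall (circleMap_mem_sphere c hRpos.le θ))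
      rw [sub_zero, abs_of_pos Real.two_pi_pos] at h4
      calc (∫ θ : ℝ in (0)..2 * Real.pi, ‖φ (circleMap c R' θ)‖)
          ≤ ‖∫ θ : ℝ in (0)..2 * Real.pi, ‖φ (circleMap c R' θ)‖‖ := le_abs_self _
        _ ≤ M * (2 * Real.pi) := h4
    have h5 : ((2 * Real.pi)⁻¹ *
        ∫ θ : ℝ in (0)..2 * Real.pi, ‖φ (circleMap c R' θ)‖) ≤ M := by
      rw [inv_mul_le_iff₀ Real.two_pi_pos]
      linarith [h3]
    calc ‖p.coeff k‖ ≤ ‖p k‖ := h1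
      _ ≤ ((2 * Real.pi)⁻¹ *
          ∫ θ : ℝ in (0)..2 * Real.pi, ‖φ (circleMap c R' θ)‖) * |(R':ℝ)|⁻¹ ^ k := h2
      _ ≤ M * |(R':ℝ)|⁻¹ ^ k := by
          apply mul_le_mul_of_nonneg_right h5 (by positivity)
      _ = M / R' ^ k := by
          rw [abs_of_pos hRpos, div_eq_mul_inv, inv_pow]
  have hc0 : p.coeff 0 = φ c := H.coeff_zero 1
  have hc1 : deriv φ c = p.coeff 1 := by
    have h := H.hasFPowerSeriesAt.deriv
    rw [h]
    show (p 1 fun _ => (1:ℂ)) = p 1 1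
    congr 1
  -- tail sum
  have htail : HasSum (fun k : ℕ => η ^ (k + 2) • p.coeff (k + 2))
      (φ (c + η) - ∑ k ∈ Finset.range 2, η ^ k • p.coeff k) :=
    (hasSum_nat_add_iff' 2).2 hsum
  have hval : φ (c + η) - ∑ k ∈ Finset.range 2, η ^ k • p.coeff k
      = φ (c + η) - φ c - η * deriv φ c := by
    rw [Finset.sum_range_succ, Finset.sum_range_one, hc0, hc1]
    simp [smul_eq_mul]
    ring
  have hmaj : ∀ k : ℕ, ‖η ^ (k + 2) • p.coeff (k + 2)‖ ≤
      (M * ‖η‖^2 / R'^2) * (1/2) ^ k := by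
    intro k
    rw [norm_smul, norm_pow]
    calc ‖η‖ ^ (k+2) * ‖p.coeff (k+2)‖ ≤ ‖η‖ ^ (k+2) * (M / R' ^ (k+2)) :=
          mul_le_mul_of_nonneg_left (hcoeff _) (by positivity)
      _ = M * ‖η‖^2 / R'^2 * (‖η‖ / R') ^ k := by
          rw [div_pow, pow_add]
          field_simp
          ring
      _ ≤ M * ‖η‖^2 / R'^2 * (1/2) ^ k := by
          apply mul_le_mul_of_nonneg_left _ (by positivity)
          apply pow_le_pow_left₀ (by positivity)
          rw [div_le_div_iff₀ hRpos (by norm_num : (0:ℝ) < 2)]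
          linarith
  have hsummaj : Summable (fun k : ℕ => (M * ‖η‖^2 / R'^2) * (1/2) ^ k) :=
    (summable_geometric_of_lt_one (by norm_num) (by norm_num)).mul_left _
  have hsumnorm : Summable fun k : ℕ => ‖η ^ (k + 2) • p.coeff (k + 2)‖ :=
    Summable.of_nonneg_of_le (fun k => norm_nonneg _) hmaj hsummaj
  have h6 : ‖φ (c + η) - φ c - η * deriv φ c‖ ≤
      ∑' k : ℕ, (M * ‖η‖^2 / R'^2) * (1/2) ^ k := by
    rw [← hval, ← htail.tsum_eq]
    exact le_trans (norm_tsum_le_tsum_norm hsumnorm)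
      (Summable.tsum_le_tsum hmaj hsumnorm hsummaj)
  rw [tsum_mul_left, tsum_geometric_of_lt_one (by norm_num) (by norm_num)] at h6
  calc ‖φ (c + η) - φ c - η * deriv φ c‖ ≤ (M * ‖η‖^2 / R'^2) * (1 - 1/2)⁻¹ := h6
    _ = 2 * M * ‖η‖ ^ 2 / R'^2 := by norm_num; ring

/-- One-variable Cauchy estimate for a partial derivative. -/
lemma pderiv_bound {n : ℕ} {U : Set (Fin n → ℂ)} {h : (Fin n → ℂ) → ℂ}
    (hg : Good U h) (i : Fin n) {z : Fin n → ℂ} {δ M : ℝ} (hδ : 0 < δ)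
    (hsub : Metric.closedBall z δ ⊆ U)
    (hb : ∀ x ∈ Metric.closedBall z δ, ‖h x‖ ≤ M) :
    ‖pderivC i h z‖ ≤ M / δ := by
  have hmem : ∀ t ∈ Metric.closedBall (z i) δ,
      Function.update z i t ∈ Metric.closedBall z δ := by
    intro t ht
    rw [Metric.mem_closedBall] at *
    exact le_trans (dist_update_le z z i t) (max_le (by simpa using hδ.le) ht)
  have hdOn : DifferentiableOn ℂ (fun t => h (Function.update z i t))
      (Metric.closedBall (z i) δ) :=
    (hg.slice_diffOn z i).mono fun t ht => hsub (hmem t ht)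
  have hdc : DiffContOnCl ℂ (fun t => h (Function.update z i t)) (Metric.ball (z i) δ) := by
    apply DifferentiableOn.diffContOnCl
    rwa [closure_ball _ hδ.ne']
  exact Complex.norm_deriv_le_of_forall_mem_sphere_norm_le hδ hdc
    fun t ht => hb _ (hmem t (Metric.sphere_subset_closedBall ht))

lemma norm_nat_succ_inv (k : ℕ) : ‖(((k:ℂ)+1))⁻¹‖ = ((k:ℝ)+1)⁻¹ := by
  have h1 : ((k:ℂ)+1) = (((k+1:ℕ)):ℂ) := by push_cast; ring
  rw [norm_inv, h1, Complex.norm_natCast]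
  push_cast; ring

/-- The difference quotients in direction `i` converge uniformly to `pderivC i h`
on a small closed ball. -/
lemma tendsto_quot {n : ℕ} {U : Set (Fin n → ℂ)} {h : (Fin n → ℂ) → ℂ}
    (hg : Good U h) (i : Fin n) {z₀ : Fin n → ℂ} {δ : ℝ} (hδ : 0 < δ)
    (hsub : Metric.closedBall z₀ (3*δ) ⊆ U) :
    TendstoUniformlyOn
      (fun (k : ℕ) (x : Fin n → ℂ) =>
        ((k:ℂ)+1) * (h (x + ((k:ℂ)+1)⁻¹ • (Pi.single i (1:ℂ) : Fin n → ℂ)) - h x))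
      (pderivC i h) atTop (Metric.closedBall z₀ δ) := by
  have hcpt : IsCompact (Metric.closedBall z₀ (3*δ)) := isCompact_closedBall _ _
  obtain ⟨C, hC⟩ := hcpt.exists_bound_of_continuousOn (hg.1.mono hsub)
  set M := max C 0 with hMdef
  have hM : 0 ≤ M := le_max_right _ _
  have hbM : ∀ x ∈ Metric.closedBall z₀ (3*δ), ‖h x‖ ≤ M :=
    fun x hx => le_trans (hC x hx) (le_max_left _ _)
  rw [Metric.tendstoUniformlyOn_iff]
  intro ε hε
  have t1 : Tendsto (fun k : ℕ => ((k:ℝ)+1)⁻¹) atTop (𝓝 0) :=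
    tendsto_inv_atTop_zero.comp (tendsto_atTop_add_const_right _ 1 tendsto_natCast_atTop_atTop)
  have t2 : Tendsto (fun k : ℕ => 2*M*((k:ℝ)+1)⁻¹/(2*δ)^2) atTop (𝓝 0) := by
    have := (t1.const_mul (2*M)).div_const ((2*δ)^2)
    simpa using this
  filter_upwards [t1.eventually_lt_const hδ, t2.eventually_lt_const hε] with k hk1 hk2
  intro x hx
  set η : ℂ := ((k:ℂ)+1)⁻¹ with hηdef
  have hηnorm : ‖η‖ = ((k:ℝ)+1)⁻¹ := norm_nat_succ_inv k
  set c : ℂ := x i with hcdef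
  set ψ : ℂ → ℂ := fun t => h (Function.update x i t) with hψdef
  have hxz : dist x z₀ ≤ δ := Metric.mem_closedBall.1 hx
  have hmem2 : ∀ t ∈ Metric.closedBall c (2*δ),
      Function.update x i t ∈ Metric.closedBall z₀ (3*δ) := by
    intro t ht
    rw [Metric.mem_closedBall] at ht ⊢
    refine le_trans (dist_update_le x z₀ i t) (max_le (by linarith) ?_)
    calc dist t (z₀ i) ≤ dist t c + dist c (z₀ i) := dist_triangle _ _ _
      _ ≤ 2*δ + dist x z₀ := by
          have := dist_le_pi_dist x z₀ i
          exact add_le_add ht this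
      _ ≤ 3*δ := by linarith
  have hψd : DifferentiableOn ℂ ψ (Metric.closedBall c (2*δ)) :=
    (hg.slice_diffOn x i).mono fun t ht => hsub (hmem2 t ht)
  have hψb : ∀ t ∈ Metric.closedBall c (2*δ), ‖ψ t‖ ≤ M :=
    fun t ht => hbM _ (hmem2 t ht)
  have hηle : ‖η‖ ≤ (2*δ)/2 := by rw [hηnorm]; linarith
  have hT := taylor2 (by linarith : (0:ℝ) < 2*δ) hM hψd hψb hηle
  have hne : ((k:ℂ)+1) ≠ 0 := Nat.cast_add_one_ne_zero k
  have hinv : ((k:ℂ)+1) * η = 1 := mul_inv_cancel₀ hne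
  have hupd : x + η • (Pi.single i (1:ℂ) : Fin n → ℂ) = Function.update x i (c + η) :=
    add_single_eq_update x i η
  have hps : pderivC i h x = deriv ψ c := rfl
  have heq : ((k:ℂ)+1) * (h (x + η • (Pi.single i (1:ℂ) : Fin n → ℂ)) - h x) - pderivC i h x
      = ((k:ℂ)+1) * (ψ (c + η) - ψ c - η * deriv ψ c) := by
    rw [hupd, hps]
    have h1 : h (Function.update x i (c + η)) = ψ (c + η) := rfl
    have h2 : h x = ψ c := by
      simp only [hψdef, hcdef, Function.update_eq_self]
    rw [h1, h2, mul_sub ((k:ℂ)+1) (ψ (c+η) - ψ c), ← mul_assoc, hinv, one_mul]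
  rw [dist_eq_norm']
  rw [heq, norm_mul]
  have hknorm : ‖((k:ℂ)+1)‖ = (k:ℝ)+1 := by
    have h1 : ((k:ℂ)+1) = (((k+1:ℕ)):ℂ) := by push_cast; ring
    rw [h1, Complex.norm_natCast]; push_cast; ring
  rw [hknorm]
  calc ((k:ℝ)+1) * ‖ψ (c + η) - ψ c - η * deriv ψ c‖
      ≤ ((k:ℝ)+1) * (2 * M * ‖η‖ ^ 2 / (2*δ) ^ 2) :=
        mul_le_mul_of_nonneg_left hT (by positivity)
    _ = 2*M*((k:ℝ)+1)⁻¹/(2*δ)^2 := by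
        rw [hηnorm]
        have : ((k:ℝ)+1) ≠ 0 := by positivity
        field_simp
    _ < ε := hk2

lemma exists_threeBall {n : ℕ} {U : Set (Fin n → ℂ)} (hU : IsOpen U)
    {z₀ : Fin n → ℂ} (hz₀ : z₀ ∈ U) :
    ∃ δ : ℝ, 0 < δ ∧ Metric.closedBall z₀ (3*δ) ⊆ U := by
  obtain ⟨r, hr, hrU⟩ := Metric.isOpen_iff.1 hU z₀ hz₀
  refine ⟨r/4, by linarith, ?_⟩
  refine subset_trans ?_ hrU
  intro x hx
  rw [Metric.mem_closedBall] at hx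
  rw [Metric.mem_ball]
  linarith

/-- The key closure property: partial derivatives of a `Good` function are `Good`. -/
lemma Good.pderiv {n : ℕ} {U : Set (Fin n → ℂ)} {h : (Fin n → ℂ) → ℂ}
    (hU : IsOpen U) (hg : Good U h) (i : Fin n) : Good U (pderivC i h) := by
  constructor
  · -- continuity
    intro z₀ hz₀
    obtain ⟨δ, hδ, hsub⟩ := exists_threeBall hU hz₀
    have Tq := tendsto_quot hg i hδ hsub
    have t1 : Tendsto (fun k : ℕ => ((k:ℝ)+1)⁻¹) atTop (𝓝 0) :=
      tendsto_inv_atTop_zero.comp (tendsto_atTop_add_const_right _ 1 tendsto_natCast_atTop_atTop)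
    have hcont : ContinuousOn (pderivC i h) (Metric.closedBall z₀ δ) := by
      apply Tq.continuousOn
      apply Filter.Eventually.frequently
      filter_upwards [t1.eventually_lt_const hδ] with k hk
      have hη : ‖(((k:ℂ)+1))⁻¹‖ ≤ δ := by rw [norm_nat_succ_inv]; exact hk.le
      have hmemshift : ∀ x ∈ Metric.closedBall z₀ δ,
          x + ((k:ℂ)+1)⁻¹ • (Pi.single i (1:ℂ) : Fin n → ℂ) ∈ U := by
        intro x hx
        apply hsub
        rw [Metric.mem_closedBall]
        calc dist (x + ((k:ℂ)+1)⁻¹ • (Pi.single i (1:ℂ) : Fin n → ℂ)) z₀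
            ≤ dist (x + ((k:ℂ)+1)⁻¹ • (Pi.single i (1:ℂ) : Fin n → ℂ)) x + dist x z₀ :=
              dist_triangle _ _ _
          _ ≤ ‖((k:ℂ)+1)⁻¹ • (Pi.single i (1:ℂ) : Fin n → ℂ)‖ + δ := by
              rw [dist_comm, dist_self_add_right]
              exact add_le_add_right (Metric.mem_closedBall.1 hx) _
          _ ≤ δ + δ := by
              rw [norm_smul, Pi.norm_single, norm_one, mul_one]
              exact add_le_add_left hη _
          _ ≤ 3*δ := by linarith
      have c1 : ContinuousOn
          (fun x => h (x + ((k:ℂ)+1)⁻¹ • (Pi.single i (1:ℂ) : Fin n → ℂ)))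
          (Metric.closedBall z₀ δ) := by
        apply hg.1.comp (Continuous.continuousOn (by continuity))
        intro x hx
        exact hmemshift x hx
      have c2 : ContinuousOn h (Metric.closedBall z₀ δ) := by
        apply hg.1.mono
        refine subset_trans ?_ hsub
        exact Metric.closedBall_subset_closedBall (by linarith)
      exact continuousOn_const.mul (c1.sub c2)
    exact (hcont.continuousAt (Metric.closedBall_mem_nhds z₀ hδ)).continuousWithinAt
  · -- slice differentiability
    intro z₀ hz₀ i'
    obtain ⟨δ, hδ, hsub⟩ := exists_threeBall hU hz₀
    have Tq := tendsto_quot hg i hδ hsub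
    set line : ℂ → (Fin n → ℂ) := fun s => Function.update z₀ i' s with hline
    have hmap : ∀ s ∈ Metric.closedBall (z₀ i') δ, line s ∈ Metric.closedBall z₀ δ := by
      intro s hs
      rw [Metric.mem_closedBall] at hs ⊢
      exact le_trans (dist_update_le z₀ z₀ i' s) (max_le (by simpa using hδ.le) hs)
    have Tq' : TendstoUniformlyOn
        (fun (k:ℕ) => (fun x => ((k:ℂ)+1) *
          (h (x + ((k:ℂ)+1)⁻¹ • (Pi.single i (1:ℂ) : Fin n → ℂ)) - h x)) ∘ line)
        ((pderivC i h) ∘ line) atTop (Metric.closedBall (z₀ i') δ) :=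
      (Tq.comp line).mono fun s hs => hmap s hs
    have Tl : TendstoLocallyUniformlyOn _ _ atTop (Metric.ball (z₀ i') δ) :=
      Tq'.tendstoLocallyUniformlyOn.mono Metric.ball_subset_closedBall
    have t1 : Tendsto (fun k : ℕ => ((k:ℝ)+1)⁻¹) atTop (𝓝 0) :=
      tendsto_inv_atTop_zero.comp (tendsto_atTop_add_const_right _ 1 tendsto_natCast_atTop_atTop)
    have hdiff : ∀ᶠ k : ℕ in atTop, DifferentiableOn ℂ
        ((fun x => ((k:ℂ)+1) *
          (h (x + ((k:ℂ)+1)⁻¹ • (Pi.single i (1:ℂ) : Fin n → ℂ)) - h x)) ∘ line)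
        (Metric.ball (z₀ i') δ) := by
      filter_upwards [t1.eventually_lt_const hδ] with k hk
      set η : ℂ := ((k:ℂ)+1)⁻¹ with hηdef
      have hη : ‖η‖ ≤ δ := by rw [hηdef, norm_nat_succ_inv]; exact hk.le
      have d2 : DifferentiableOn ℂ (fun s => h (Function.update z₀ i' s))
          (Metric.ball (z₀ i') δ) := by
        apply (hg.slice_diffOn z₀ i').mono
        intro s hs
        exact hsub (Metric.closedBall_subset_closedBall (by linarith)
          (hmap s (Metric.ball_subset_closedBall hs)))
      have d1 : DifferentiableOn ℂ
          (fun s => h (Function.update z₀ i' s + η • (Pi.single i (1:ℂ) : Fin n → ℂ)))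
          (Metric.ball (z₀ i') δ) := by
        rcases eq_or_ne i i' with rfl | hne
        · -- same direction: shift inside the slice
          have hE : ∀ s : ℂ, Function.update z₀ i s + η • (Pi.single i (1:ℂ) : Fin n → ℂ)
              = Function.update z₀ i (s + η) := by
            intro s
            rw [add_single_eq_update]
            simp [Function.update_idem]
          simp only [hE]
          apply (hg.slice_diffOn z₀ i).comp ((differentiable_id.add_const η).differentiableOn)
          intro s hs
          show Function.update z₀ i (s + η) ∈ U
          apply hsub
          rw [Metric.mem_closedBall]
          refine le_trans (dist_update_le z₀ z₀ i (s+η)) (max_le (by simpa using by linarith) ?_)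
          calc dist (s + η) (z₀ i) ≤ dist (s+η) s + dist s (z₀ i) := dist_triangle _ _ _
            _ ≤ ‖η‖ + δ := by
                rw [dist_comm (s+η) s, dist_self_add_right]
                exact add_le_add_right (Metric.mem_ball.1 hs).le _
            _ ≤ 3*δ := by linarith
        · -- different direction: slice through a shifted base point
          have hE : ∀ s : ℂ, Function.update z₀ i' s + η • (Pi.single i (1:ℂ) : Fin n → ℂ)
              = Function.update (z₀ + η • (Pi.single i (1:ℂ) : Fin n → ℂ)) i' s := by
            intro s
            funext j
            by_cases hj : j = i'
            · subst hj
              simp [Pi.single_eq_of_ne hne.symm]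
            · simp [Function.update_of_ne hj]
          simp only [hE]
          apply (hg.slice_diffOn (z₀ + η • (Pi.single i (1:ℂ) : Fin n → ℂ)) i').mono
          intro s hs
          show Function.update (z₀ + η • (Pi.single i (1:ℂ) : Fin n → ℂ)) i' s ∈ U
          rw [← hE]
          apply hsub
          rw [Metric.mem_closedBall]
          calc dist (Function.update z₀ i' s + η • (Pi.single i (1:ℂ) : Fin n → ℂ)) z₀
              ≤ dist (Function.update z₀ i' s + η • (Pi.single i (1:ℂ) : Fin n → ℂ))
                  (Function.update z₀ i' s) + dist (Function.update z₀ i' s) z₀ :=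
                dist_triangle _ _ _
            _ ≤ ‖η • (Pi.single i (1:ℂ) : Fin n → ℂ)‖ + δ := by
                rw [dist_comm, dist_self_add_right]
                exact add_le_add_right (Metric.mem_closedBall.1 (hmap s (Metric.ball_subset_closedBall hs))) _
            _ ≤ δ + δ := by
                rw [norm_smul, Pi.norm_single, norm_one, mul_one]
                exact add_le_add_left hη _
            _ ≤ 3*δ := by linarith
      exact (differentiableOn_const _).mul (d1.sub d2)
    have hres := Tl.differentiableOn hdiff Metric.isOpen_ball
    have : DifferentiableAt ℂ ((pderivC i h) ∘ line) (z₀ i') :=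
      hres.differentiableAt (Metric.isOpen_ball.mem_nhds (Metric.mem_ball_self hδ))
    exact this

lemma Good.iter {n : ℕ} {U : Set (Fin n → ℂ)} {h : (Fin n → ℂ) → ℂ}
    (hU : IsOpen U) (hg : Good U h) (i : Fin n) :
    ∀ m : ℕ, Good U ((pderivC i)^[m] h) := by
  intro m
  induction m with
  | zero => simpa using hg
  | succ m ih =>
    rw [Function.iterate_succ_apply']
    exact ih.pderiv hU i

lemma Good.foldr {n : ℕ} {U : Set (Fin n → ℂ)} {h : (Fin n → ℂ) → ℂ}
    (hU : IsOpen U) (hg : Good U h) (α : Fin n → ℕ) :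
    ∀ l : List (Fin n), Good U (l.foldr (fun i g => (pderivC i)^[α i] g) h) := by
  intro l
  induction l with
  | nil => simpa using hg
  | cons i l ih => exact ih.iter hU i (α i)

lemma Good.multi {n : ℕ} {U : Set (Fin n → ℂ)} {h : (Fin n → ℂ) → ℂ}
    (hU : IsOpen U) (hg : Good U h) (α : Fin n → ℕ) :
    Good U (multiDeriv α h) := hg.foldr hU α _

lemma iter_bound {n : ℕ} {U : Set (Fin n → ℂ)} (hU : IsOpen U)
    {F : (Fin n → ℂ) → ℂ} (hgF : Good U F) (i : Fin n) {z₀ : Fin n → ℂ}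
    {M s δ : ℝ} (hδ : 0 < δ) (hsU : Metric.closedBall z₀ s ⊆ U)
    (hb : ∀ x ∈ Metric.closedBall z₀ s, ‖F x‖ ≤ M) :
    ∀ m : ℕ, ∀ x ∈ Metric.closedBall z₀ (s - m*δ),
      ‖(pderivC i)^[m] F x‖ ≤ M / δ^m := by
  intro m
  induction m with
  | zero =>
    intro x hx
    simp only [Function.iterate_zero, id_eq, pow_zero, div_one]
    exact hb x (by simpa using hx)
  | succ m ih =>
    intro x hx
    rw [Function.iterate_succ_apply']
    have hsubm : Metric.closedBall x δ ⊆ Metric.closedBall z₀ (s - m*δ) := by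
      intro y hy
      rw [Metric.mem_closedBall] at *
      push_cast at hx
      calc dist y z₀ ≤ dist y x + dist x z₀ := dist_triangle _ _ _
        _ ≤ δ + (s - ((m:ℝ)+1)*δ) := add_le_add hy hx
        _ ≤ s - m*δ := by ring_nf; rfl
    have hsubU : Metric.closedBall z₀ (s - m*δ) ⊆ U :=
      subset_trans (Metric.closedBall_subset_closedBall (by nlinarith [hδ.le])) hsU
    have h1 : ‖pderivC i ((pderivC i)^[m] F) x‖ ≤ (M / δ^m) / δ := by
      apply pderiv_bound (hgF.iter hU i m) i hδ (subset_trans hsubm hsubU)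
      intro y hy
      exact ih y (hsubm hy)
    calc ‖pderivC i ((pderivC i)^[m] F) x‖ ≤ (M / δ^m) / δ := h1
      _ = M / δ^(m+1) := by rw [div_div, ← pow_succ]

lemma foldr_bound {n : ℕ} {U : Set (Fin n → ℂ)} (hU : IsOpen U)
    {h : (Fin n → ℂ) → ℂ} (hgh : Good U h) {z₀ : Fin n → ℂ}
    {M s δ : ℝ} (hδ : 0 < δ) (hsU : Metric.closedBall z₀ s ⊆ U)
    (hb : ∀ x ∈ Metric.closedBall z₀ s, ‖h x‖ ≤ M) (α : Fin n → ℕ) :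
    ∀ l : List (Fin n), ∀ x ∈ Metric.closedBall z₀ (s - ((l.map α).sum : ℝ)*δ),
      ‖(l.foldr (fun i g => (pderivC i)^[α i] g) h) x‖ ≤ M / δ^((l.map α).sum) := by
  intro l
  induction l with
  | nil =>
    intro x hx
    simp only [List.foldr_nil, List.map_nil, List.sum_nil, pow_zero, div_one]
    exact hb x (by simpa using hx)
  | cons i l ih =>
    intro x hx
    simp only [List.foldr_cons]
    have hK : ((((i :: l).map α).sum : ℕ) : ℝ) = (α i : ℝ) + ((l.map α).sum : ℝ) := by
      push_cast [List.map_cons, List.sum_cons]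
      ring
    have hx' : x ∈ Metric.closedBall z₀ ((s - ((l.map α).sum : ℝ)*δ) - (α i) * δ) := by
      rw [Metric.mem_closedBall] at *
      refine le_trans hx (le_of_eq ?_)
      rw [hK]; ring
    have hb' : ∀ y ∈ Metric.closedBall z₀ (s - ((l.map α).sum : ℝ)*δ),
        ‖(l.foldr (fun i g => (pderivC i)^[α i] g) h) y‖ ≤ M / δ^((l.map α).sum) :=
      fun y hy => ih y hy
    have hnn : (0:ℝ) ≤ ((l.map α).sum : ℝ) * δ := mul_nonneg (Nat.cast_nonneg _) hδ.le
    have hsub' : Metric.closedBall z₀ (s - ((l.map α).sum : ℝ)*δ) ⊆ U :=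
      subset_trans (Metric.closedBall_subset_closedBall (by linarith)) hsU
    have := iter_bound hU (hgh.foldr hU α l) i hδ hsub' hb' (α i) x hx'
    calc ‖(pderivC i)^[α i] (l.foldr (fun i g => (pderivC i)^[α i] g) h) x‖
        ≤ (M / δ^((l.map α).sum)) / δ^(α i) := this
      _ = M / δ^(((i :: l).map α).sum) := by
          rw [div_div, ← pow_add]
          congr 2
          simp [List.map_cons, List.sum_cons, Nat.add_comm]

lemma one_le_mfact {n : ℕ} (α : Fin n → ℕ) : 1 ≤ mfact α :=
  Finset.one_le_prod' fun i _ => Nat.one_le_iff_ne_zero.2 (Nat.factorial_ne_zero _)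

lemma foldr_of_zero {n : ℕ} {α : Fin n → ℕ} (hα : ∀ i, α i = 0)
    (h : (Fin n → ℂ) → ℂ) :
    ∀ l : List (Fin n), l.foldr (fun i g => (pderivC i)^[α i] g) h = h := by
  intro l
  induction l with
  | nil => rfl
  | cons i l ih => simp [List.foldr_cons, hα i, ih]

/-- The main Cauchy-type estimate for iterated partial derivatives. -/
lemma multiDeriv_bound {n : ℕ} {U : Set (Fin n → ℂ)} (hU : IsOpen U)
    {h : (Fin n → ℂ) → ℂ} (hgh : Good U h) {z₀ : Fin n → ℂ} {M R : ℝ}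
    (hR : 0 < R) (hM : 0 ≤ M) (hsub : Metric.closedBall z₀ (2*R) ⊆ U)
    (hb : ∀ x ∈ Metric.closedBall z₀ (2*R), ‖h x‖ ≤ M) (α : Fin n → ℕ)
    {x : Fin n → ℂ} (hx : x ∈ Metric.closedBall z₀ R) :
    ‖multiDeriv α h x‖ ≤ M * (3 * 2^n / R)^(mdeg α) * (mfact α : ℝ) := by
  rcases Nat.eq_zero_or_pos (mdeg α) with hk0 | hkpos
  · have hα : ∀ i, α i = 0 := by
      intro i
      have := (Finset.sum_eq_zero_iff.1 hk0) i (Finset.mem_univ i)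
      exact this
    have : multiDeriv α h = h := foldr_of_zero hα h _
    rw [this, hk0, pow_zero, mul_one]
    have h1 : ‖h x‖ ≤ M :=
      hb x (Metric.closedBall_subset_closedBall (by linarith) hx)
    calc ‖h x‖ ≤ M := h1
      _ ≤ M * (mfact α : ℝ) := le_mul_of_one_le_right hM (by exact_mod_cast one_le_mfact α)
  · set k := mdeg α with hkdef
    have hkne : ((k:ℕ):ℝ) ≠ 0 := by positivity
    have hδ : (0:ℝ) < R / k := by positivity
    have hsum : (((List.finRange n).map α).sum) = k := by
      rw [hkdef, mdeg, Fin.sum_univ_def]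
    have hx' : x ∈ Metric.closedBall z₀
        (2*R - (((List.finRange n).map α).sum : ℝ) * (R / k)) := by
      rw [Metric.mem_closedBall] at *
      refine le_trans hx (le_of_eq ?_)
      rw [hsum]
      field_simp
      ring
    have hmain := foldr_bound hU hgh hδ hsub hb α (List.finRange n) x hx'
    rw [hsum] at hmain
    have hRk : (0:ℝ) < R ^ k := by positivity
    calc ‖multiDeriv α h x‖ ≤ M / (R/(k:ℝ))^k := hmain
      _ = M * ((k:ℝ))^k / R^k := by rw [div_pow, div_div_eq_mul_div]
      _ ≤ M * ((3 * 2^n : ℝ)^k * (mfact α : ℝ)) / R^k := by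
          gcongr
          exact mdeg_pow_le α
      _ = M * (3 * 2^n / R)^k * (mfact α : ℝ) := by
          rw [div_pow]; ring

lemma pderiv_sub {n : ℕ} {U : Set (Fin n → ℂ)} (hU : IsOpen U)
    {F G H : (Fin n → ℂ) → ℂ} (hgG : Good U G) (hgH : Good U H)
    (hFGH : ∀ x ∈ U, F x = G x - H x) (i : Fin n) :
    ∀ z ∈ U, pderivC i F z = pderivC i G z - pderivC i H z := by
  intro z hz
  have hopen : IsOpen {t : ℂ | Function.update z i t ∈ U} :=
    hU.preimage (continuous_updateFn z i)
  have hmem : z i ∈ {t : ℂ | Function.update z i t ∈ U} := by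
    show Function.update z i (z i) ∈ U
    rwa [Function.update_eq_self]
  have hev : (fun t => F (Function.update z i t)) =ᶠ[𝓝 (z i)]
      fun t => G (Function.update z i t) - H (Function.update z i t) := by
    filter_upwards [hopen.mem_nhds hmem] with t ht
    exact hFGH _ ht
  show deriv (fun t => F (Function.update z i t)) (z i) = _
  rw [hev.deriv_eq, deriv_fun_sub (hgG.2 z hz i) (hgH.2 z hz i)]; rfl

lemma iter_sub {n : ℕ} {U : Set (Fin n → ℂ)} (hU : IsOpen U) (i : Fin n) :
    ∀ m : ℕ, ∀ F G H : (Fin n → ℂ) → ℂ, Good U G → Good U H →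
      (∀ x ∈ U, F x = G x - H x) →
      ∀ z ∈ U, (pderivC i)^[m] F z = (pderivC i)^[m] G z - (pderivC i)^[m] H z := by
  intro m
  induction m with
  | zero => intro F G H _ _ hFGH z hz; simpa using hFGH z hz
  | succ m ih =>
    intro F G H hgG hgH hFGH z hz
    simp only [Function.iterate_succ_apply']
    exact pderiv_sub hU (hgG.iter hU i m) (hgH.iter hU i m)
      (ih F G H hgG hgH hFGH) i z hz

lemma multiDeriv_sub {n : ℕ} {U : Set (Fin n → ℂ)} (hU : IsOpen U)
    {G H : (Fin n → ℂ) → ℂ} (hgG : Good U G) (hgH : Good U H) (α : Fin n → ℕ) :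
    ∀ z ∈ U, multiDeriv α (fun x => G x - H x) z
      = multiDeriv α G z - multiDeriv α H z := by
  suffices h : ∀ l : List (Fin n), ∀ z ∈ U,
      l.foldr (fun i g => (pderivC i)^[α i] g) (fun x => G x - H x) z
      = l.foldr (fun i g => (pderivC i)^[α i] g) G z
        - l.foldr (fun i g => (pderivC i)^[α i] g) H z by
    exact h (List.finRange n)
  intro l
  induction l with
  | nil => intro z _; rfl
  | cons i l ih =>
    intro z hz
    simp only [List.foldr_cons]
    exact iter_sub hU i (α i) _ _ _ (hgG.foldr hU α l) (hgH.foldr hU α l) ih z hz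

/-- Continuity of the pairing `(w, f, z) ↦ (ξ(w)·f)(z)` along sequences: if `ξ(·)` is locally
uniformly bounded near `w₀`, each coefficient is continuous at `w₀`, `z_j → z₀` inside a
relatively compact open set `V`, and `f_j → f` compactly on `V`, then
`(ξ(w_j)·f_j)(z_j) → (ξ(w₀)·f)(z₀)`. -/
theorem statement3 {n m : ℕ} (D : Set (Fin m → ℂ)) (hDo : IsOpen D)
    (ξ : (Fin m → ℂ) → (Fin n → ℕ) → ℂ) (hmem : ∀ w ∈ D, MemL1 (ξ w))
    (w₀ : Fin m → ℂ) (hw₀ : w₀ ∈ D)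
    (hlub : ∀ ρ : ℝ, 0 < ρ → ∃ V ∈ 𝓝 w₀, ∃ C : ℝ, ∀ w ∈ V ∩ D,
      (∑' α : Fin n → ℕ, ENNReal.ofReal (‖ξ w α‖ * ρ ^ mdeg α)) ≤ ENNReal.ofReal C)
    (hcont : ∀ α : Fin n → ℕ, ContinuousWithinAt (fun w => ξ w α) D w₀)
    (V : Set (Fin n → ℂ)) (hVo : IsOpen V) (hVc : IsCompact (closure V))
    (f : ℕ → (Fin n → ℂ) → ℂ) (hf : ∀ j, DifferentiableOn ℂ (f j) V)
    (g : (Fin n → ℂ) → ℂ) (hg : DifferentiableOn ℂ g V)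
    (hconv : TendstoLocallyUniformlyOn (fun j => f j) g atTop V)
    (z : ℕ → Fin n → ℂ) (hz : ∀ j, z j ∈ V) (z₀ : Fin n → ℂ) (hz₀ : z₀ ∈ V)
    (hzlim : Filter.Tendsto z atTop (𝓝 z₀))
    (w : ℕ → Fin m → ℂ) (hw : ∀ j, w j ∈ D)
    (hwlim : Filter.Tendsto w atTop (𝓝 w₀)) :
    Filter.Tendsto (fun j => xiAct (ξ (w j)) (f j) (z j)) atTop
      (𝓝 (xiAct (ξ w₀) g z₀)) := by
  classical
  -- `w` tends to `w₀` within `D`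
  have hwD : Tendsto w atTop (𝓝[D] w₀) :=
    tendsto_nhdsWithin_iff.2 ⟨hwlim, Eventually.of_forall hw⟩
  -- a radius around z₀
  obtain ⟨R, hR, hRV⟩ : ∃ R : ℝ, 0 < R ∧ Metric.closedBall z₀ (3*R) ⊆ V := by
    obtain ⟨r, hr, hrV⟩ := Metric.isOpen_iff.1 hVo z₀ hz₀
    refine ⟨r/4, by linarith, subset_trans ?_ hrV⟩
    intro x hx
    rw [Metric.mem_closedBall] at hx
    rw [Metric.mem_ball]
    linarith
  set K := Metric.closedBall z₀ (2*R) with hKdef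
  have hKV : K ⊆ V := subset_trans (Metric.closedBall_subset_closedBall (by linarith)) hRV
  have hKc : IsCompact K := isCompact_closedBall _ _
  have hz₀R : z₀ ∈ Metric.closedBall z₀ R := Metric.mem_closedBall_self hR.le
  have hgood_g : Good V g := good_of_diff hVo hg
  -- bound for g on K
  obtain ⟨C₀, hC₀⟩ := hKc.exists_bound_of_continuousOn (hg.continuousOn.mono hKV)
  set Mg := max C₀ 0 with hMgdef
  have hMg : 0 ≤ Mg := le_max_right _ _
  have hMgb : ∀ x ∈ K, ‖g x‖ ≤ Mg := fun x hx => le_trans (hC₀ x hx) (le_max_left _ _)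
  -- the geometric constant
  set B : ℝ := 3 * 2^n / R with hBdef
  have hB : 0 < B := by positivity
  -- uniform `ℓ¹` bounds near w₀
  obtain ⟨V₁, hV₁, C₁, hC₁⟩ := hlub B hB
  obtain ⟨V₂, hV₂, C₂, hC₂⟩ := hlub (2*B) (by positivity)
  set C₁' := max C₁ 0 with hC₁'def
  set C₂' := max C₂ 0 with hC₂'def
  have hC₁nn : 0 ≤ C₁' := le_max_right _ _
  have hC₂nn : 0 ≤ C₂' := le_max_right _ _
  have hlreal : ∀ (ρ : ℝ), 0 < ρ → ∀ (Vν : Set (Fin m → ℂ)) (Cν : ℝ),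
      (∀ w' ∈ Vν ∩ D, (∑' α : Fin n → ℕ, ENNReal.ofReal (‖ξ w' α‖ * ρ ^ mdeg α))
        ≤ ENNReal.ofReal Cν) →
      ∀ w' ∈ Vν ∩ D, (∑' α : Fin n → ℕ, ‖ξ w' α‖ * ρ ^ mdeg α) ≤ max Cν 0 := by
    intro ρ hρ Vν Cν hCν w' hw'
    have hsumm : Summable fun α : Fin n → ℕ => ‖ξ w' α‖ * ρ ^ mdeg α := hmem w' hw'.2 ρ hρ
    have hofr : ENNReal.ofReal (∑' α : Fin n → ℕ, ‖ξ w' α‖ * ρ ^ mdeg α)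
        = ∑' α : Fin n → ℕ, ENNReal.ofReal (‖ξ w' α‖ * ρ ^ mdeg α) :=
      ENNReal.ofReal_tsum_of_nonneg (fun α => by positivity) hsumm
    have h2 := hCν w' hw'
    rw [← hofr] at h2
    have h3 := ENNReal.toReal_mono (by simp) h2
    rw [ENNReal.toReal_ofReal (tsum_nonneg fun α => by positivity)] at h3
    rwa [ENNReal.toReal_ofReal'] at h3
  have hl₁ : ∀ w' ∈ V₁ ∩ D, (∑' α : Fin n → ℕ, ‖ξ w' α‖ * B ^ mdeg α) ≤ C₁' :=
    hlreal B hB V₁ C₁ hC₁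
  have hl₂ : ∀ w' ∈ V₂ ∩ D, (∑' α : Fin n → ℕ, ‖ξ w' α‖ * (2*B) ^ mdeg α) ≤ C₂' :=
    hlreal (2*B) (by positivity) V₂ C₂ hC₂
  -- term bound
  have hmfpos : ∀ α : Fin n → ℕ, (0:ℝ) < (mfact α : ℝ) := fun α => by
    exact_mod_cast lt_of_lt_of_le zero_lt_one (one_le_mfact α)
  have hbound : ∀ (h' : (Fin n → ℂ) → ℂ), Good V h' → ∀ M : ℝ, 0 ≤ M →
      (∀ x ∈ K, ‖h' x‖ ≤ M) → ∀ (α : Fin n → ℕ), ∀ z' ∈ Metric.closedBall z₀ R,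
      ‖multiDeriv α h' z' / (mfact α : ℂ)‖ ≤ M * B ^ mdeg α := by
    intro h' hg' M hM hMb α z' hz'
    have h1 := multiDeriv_bound hVo hg' hR hM hKV hMb α hz'
    rw [norm_div, Complex.norm_natCast, div_le_iff₀ (hmfpos α)]
    rw [hBdef]
    exact h1
  -- summability
  have hsummable : ∀ w' ∈ D, ∀ (h' : (Fin n → ℂ) → ℂ), Good V h' → ∀ M : ℝ, 0 ≤ M →
      (∀ x ∈ K, ‖h' x‖ ≤ M) → ∀ z' ∈ Metric.closedBall z₀ R,
      Summable (fun α : Fin n → ℕ => ξ w' α * multiDeriv α h' z' / (mfact α : ℂ)) ∧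
      Summable (fun α : Fin n → ℕ => ‖ξ w' α * multiDeriv α h' z' / (mfact α : ℂ)‖) := by
    intro w' hw' h' hg' M hM hMb z' hz'
    have hmaj : Summable (fun α : Fin n → ℕ => ‖ξ w' α‖ * (M * B ^ mdeg α)) := by
      have := (hmem w' hw' B hB).mul_left M
      exact this.congr fun α => by ring
    have hle : ∀ α : Fin n → ℕ,
        ‖ξ w' α * multiDeriv α h' z' / (mfact α : ℂ)‖ ≤ ‖ξ w' α‖ * (M * B ^ mdeg α) := by
      intro α
      rw [mul_div_assoc, norm_mul]
      exact mul_le_mul_of_nonneg_left (hbound h' hg' M hM hMb α z' hz') (norm_nonneg _)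
    exact ⟨Summable.of_norm_bounded hmaj hle,
      Summable.of_nonneg_of_le (fun _ => norm_nonneg _) hle hmaj⟩
  -- continuity facts
  have hcont_md : ∀ α : Fin n → ℕ,
      Tendsto (fun j => multiDeriv α g (z j)) atTop (𝓝 (multiDeriv α g z₀)) := by
    intro α
    have hctsOn : ContinuousOn (multiDeriv α g) V := (hgood_g.multi hVo α).1
    exact ((hctsOn.continuousAt (hVo.mem_nhds hz₀)).tendsto).comp hzlim
  have hcont_ξ : ∀ α : Fin n → ℕ,
      Tendsto (fun j => ξ (w j) α) atTop (𝓝 (ξ w₀ α)) :=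
    fun α => ((hcont α).tendsto).comp hwD
  -- the ε-argument
  rw [Metric.tendsto_nhds]
  intro ε hε
  set Cst := Mg * C₂' + 1 with hCstdef
  have hCstpos : 0 < Cst := by positivity
  obtain ⟨N, hN⟩ := exists_pow_lt_of_lt_one (show (0:ℝ) < ε/4/Cst by positivity)
    (show (1/2:ℝ) < 1 by norm_num)
  have htail_const : (1/2:ℝ)^N * (Mg * C₂') < ε/4 := by
    have h1 : (1/2:ℝ)^N * Cst < ε/4/Cst * Cst :=
      mul_lt_mul_of_pos_right hN hCstpos
    rw [div_mul_cancel₀ _ hCstpos.ne'] at h1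
    have h2 : (1/2:ℝ)^N * (Mg * C₂') ≤ (1/2:ℝ)^N * Cst := by
      apply mul_le_mul_of_nonneg_left _ (by positivity)
      rw [hCstdef]; linarith
    linarith
  -- the finite set of small multi-indices
  have hFfin : {α : Fin n → ℕ | mdeg α ≤ N}.Finite := by
    apply Set.Finite.subset (Set.Finite.pi (fun i : Fin n => Set.finite_Iic N))
    intro α hα
    rw [Set.mem_pi]
    intro i _
    rw [Set.mem_Iic]
    have h1 : α i ≤ mdeg α :=
      Finset.single_le_sum (f := α) (fun i _ => Nat.zero_le _) (Finset.mem_univ i)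
    exact le_trans h1 hα
  set F : Finset (Fin n → ℕ) := hFfin.toFinset with hFdef
  have hFmem : ∀ α : Fin n → ℕ, α ∉ F → N < mdeg α := by
    intro α hα
    rw [hFdef, Set.Finite.mem_toFinset] at hα
    exact not_le.1 hα
  -- tail estimate
  have htail : ∀ w' ∈ V₂ ∩ D, ∀ z' ∈ Metric.closedBall z₀ R,
      ‖∑' (α : ↥((F : Set (Fin n → ℕ))ᶜ)), ξ w' α * multiDeriv α g z' / (mfact α.1 : ℂ)‖
        < ε/4 := by
    intro w' hw' z' hz'
    have hsum2 := hsummable w' hw'.2 g hgood_g Mg hMg hMgb z' hz'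
    have hmaj_full : Summable (fun α : Fin n → ℕ => ‖ξ w' α‖ * (2*B) ^ mdeg α) :=
      hmem w' hw'.2 _ (by positivity)
    set msr : (Fin n → ℕ) → ℝ :=
      fun α => ((1/2:ℝ)^N * Mg) * (‖ξ w' α‖ * (2*B) ^ mdeg α) with hmsrdef
    have hmsum : Summable msr := hmaj_full.mul_left _
    have hle : ∀ α : ↥((F : Set (Fin n → ℕ))ᶜ),
        ‖ξ w' α.1 * multiDeriv (α.1) g z' / (mfact α.1 : ℂ)‖ ≤ msr α.1 := by
      rintro ⟨α, hα⟩
      have hk : N < mdeg α := hFmem α (by simpa using hα)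
      have h1 : ‖ξ w' α * multiDeriv α g z' / (mfact α : ℂ)‖
          ≤ ‖ξ w' α‖ * (Mg * B ^ mdeg α) := by
        rw [mul_div_assoc, norm_mul]
        exact mul_le_mul_of_nonneg_left (hbound g hgood_g Mg hMg hMgb α z' hz')
          (norm_nonneg _)
      have h2 : B ^ mdeg α ≤ (1/2:ℝ)^N * (2*B) ^ mdeg α := by
        have he : B ^ mdeg α = (1/2:ℝ)^(mdeg α) * (2*B) ^ mdeg α := by
          rw [← mul_pow]
          congr 1
          ring
        rw [he]
        apply mul_le_mul_of_nonneg_right _ (by positivity)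
        exact pow_le_pow_of_le_one (by norm_num) (by norm_num) hk.le
      calc ‖ξ w' α * multiDeriv α g z' / (mfact α : ℂ)‖
          ≤ ‖ξ w' α‖ * (Mg * B ^ mdeg α) := h1
        _ ≤ ‖ξ w' α‖ * (Mg * ((1/2:ℝ)^N * (2*B) ^ mdeg α)) := by
            apply mul_le_mul_of_nonneg_left _ (norm_nonneg _)
            exact mul_le_mul_of_nonneg_left h2 hMg
        _ = msr α := by rw [hmsrdef]; ring
    have hsubnorm : Summable (fun α : ↥((F : Set (Fin n → ℕ))ᶜ) =>
        ‖ξ w' α.1 * multiDeriv (α.1) g z' / (mfact α.1 : ℂ)‖) := hsum2.2.subtype _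
    have hsubmsr : Summable (fun α : ↥((F : Set (Fin n → ℕ))ᶜ) => msr α.1) :=
      hmsum.subtype _
    have hfinsum_nonneg : 0 ≤ ∑ α ∈ F, msr α :=
      Finset.sum_nonneg fun α _ => by positivity
    have hcompl_le : (∑' (α : ↥((F : Set (Fin n → ℕ))ᶜ)), msr α.1) ≤ ∑' α, msr α := by
      have := Summable.sum_add_tsum_compl (s := F) hmsum
      have hnn : 0 ≤ ∑' (α : ↥((F : Set (Fin n → ℕ))ᶜ)), msr α.1 :=
        tsum_nonneg fun α => by positivity
      linarith
    have hmsr_total : (∑' α, msr α) ≤ (1/2:ℝ)^N * (Mg * C₂') := by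
      rw [hmsrdef]
      rw [Summable.tsum_mul_left _ hmaj_full]
      calc ((1/2:ℝ)^N * Mg) * ∑' α : Fin n → ℕ, ‖ξ w' α‖ * (2*B) ^ mdeg α
          ≤ ((1/2:ℝ)^N * Mg) * C₂' :=
            mul_le_mul_of_nonneg_left (hl₂ w' hw') (by positivity)
        _ = (1/2:ℝ)^N * (Mg * C₂') := by ring
    calc ‖∑' (α : ↥((F : Set (Fin n → ℕ))ᶜ)), ξ w' α.1 * multiDeriv (α.1) g z' / (mfact α.1 : ℂ)‖
        ≤ ∑' (α : ↥((F : Set (Fin n → ℕ))ᶜ)),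
            ‖ξ w' α.1 * multiDeriv (α.1) g z' / (mfact α.1 : ℂ)‖ :=
          norm_tsum_le_tsum_norm hsubnorm
      _ ≤ ∑' (α : ↥((F : Set (Fin n → ℕ))ᶜ)), msr α.1 :=
          Summable.tsum_le_tsum hle hsubnorm hsubmsr
      _ ≤ ∑' α, msr α := hcompl_le
      _ ≤ (1/2:ℝ)^N * (Mg * C₂') := hmsr_total
      _ < ε/4 := htail_const
  -- eventual facts
  have hTU : TendstoUniformlyOn f g atTop K :=
    (tendstoLocallyUniformlyOn_iff_forall_isCompact hVo).1 hconv K hKV hKc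
  set εA := ε / (4*(C₁'+1)) with hεAdef
  have hεApos : 0 < εA := by positivity
  have hev3 : ∀ᶠ j in atTop, ∀ x ∈ K, ‖f j x - g x‖ ≤ εA := by
    filter_upwards [(Metric.tendstoUniformlyOn_iff.1 hTU) εA hεApos] with j hj x hx
    have := hj x hx
    rw [dist_comm, dist_eq_norm] at this
    exact this.le
  have hev1 : ∀ᶠ j in atTop, z j ∈ Metric.closedBall z₀ R :=
    hzlim (Metric.closedBall_mem_nhds z₀ hR)
  have hev2 : ∀ᶠ j in atTop, w j ∈ V₁ ∩ D ∧ w j ∈ V₂ ∩ D := by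
    filter_upwards [hwlim hV₁, hwlim hV₂] with j h1 h2
    exact ⟨⟨h1, hw j⟩, ⟨h2, hw j⟩⟩
  have hev4 : ∀ᶠ j in atTop,
      dist (∑ α ∈ F, ξ (w j) α * multiDeriv α g (z j) / (mfact α : ℂ))
        (∑ α ∈ F, ξ w₀ α * multiDeriv α g z₀ / (mfact α : ℂ)) < ε/4 := by
    have hts : Tendsto (fun j => ∑ α ∈ F, ξ (w j) α * multiDeriv α g (z j) / (mfact α : ℂ))
        atTop (𝓝 (∑ α ∈ F, ξ w₀ α * multiDeriv α g z₀ / (mfact α : ℂ))) := by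
      apply tendsto_finset_sum
      intro α _
      exact ((hcont_ξ α).mul (hcont_md α)).div_const _
    exact (Metric.tendsto_nhds.1 hts) _ (by positivity)
  have hw0mem : w₀ ∈ V₂ ∩ D := ⟨mem_of_mem_nhds hV₂, hw₀⟩
  filter_upwards [hev1, hev2, hev3, hev4] with j hj1 hj2 hj3 hj4
  obtain ⟨hj2a, hj2b⟩ := hj2
  -- summability for this j
  have hgood_fj : Good V (f j) := good_of_diff hVo (hf j)
  have hgood_diff : Good V (fun x => f j x - g x) := good_of_diff hVo ((hf j).sub hg)
  have hfjb : ∀ x ∈ K, ‖f j x‖ ≤ Mg + εA := by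
    intro x hx
    calc ‖f j x‖ = ‖g x + (f j x - g x)‖ := by ring_nf
      _ ≤ ‖g x‖ + ‖f j x - g x‖ := norm_add_le _ _
      _ ≤ Mg + εA := add_le_add (hMgb x hx) (hj3 x hx)
  have hSg1 := hsummable (w j) (hw j) (f j) hgood_fj (Mg + εA) (by positivity) hfjb
    (z j) hj1
  have hSg2 := hsummable (w j) (hw j) g hgood_g Mg hMg hMgb (z j) hj1
  have hSg0 := hsummable w₀ hw₀ g hgood_g Mg hMg hMgb z₀ hz₀R
  -- part 1 : replace f j by g
  have hAG : ‖xiAct (ξ (w j)) (f j) (z j)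
      - (∑' α : Fin n → ℕ, ξ (w j) α * multiDeriv α g (z j) / (mfact α : ℂ))‖ ≤ ε/4 := by
    have hdEq : ∀ α : Fin n → ℕ,
        ξ (w j) α * multiDeriv α (f j) (z j) / (mfact α : ℂ)
          - ξ (w j) α * multiDeriv α g (z j) / (mfact α : ℂ)
        = ξ (w j) α * multiDeriv α (fun x => f j x - g x) (z j) / (mfact α : ℂ) := by
      intro α
      rw [multiDeriv_sub hVo hgood_fj hgood_g α (z j) (hz j)]
      ring
    have h1 : xiAct (ξ (w j)) (f j) (z j)
        - (∑' α : Fin n → ℕ, ξ (w j) α * multiDeriv α g (z j) / (mfact α : ℂ))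
        = ∑' α : Fin n → ℕ,
            ξ (w j) α * multiDeriv α (fun x => f j x - g x) (z j) / (mfact α : ℂ) := by
      rw [show xiAct (ξ (w j)) (f j) (z j)
          = ∑' α : Fin n → ℕ, ξ (w j) α * multiDeriv α (f j) (z j) / (mfact α : ℂ) from rfl]
      rw [← (HasSum.sub hSg1.1.hasSum hSg2.1.hasSum).tsum_eq]
      exact tsum_congr hdEq
    rw [h1]
    have hmaj : Summable (fun α : Fin n → ℕ => ‖ξ (w j) α‖ * (εA * B ^ mdeg α)) := by
      have := (hmem (w j) (hw j) B hB).mul_left εA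
      exact this.congr fun α => by ring
    have hle : ∀ α : Fin n → ℕ,
        ‖ξ (w j) α * multiDeriv α (fun x => f j x - g x) (z j) / (mfact α : ℂ)‖
          ≤ ‖ξ (w j) α‖ * (εA * B ^ mdeg α) := by
      intro α
      rw [mul_div_assoc, norm_mul]
      exact mul_le_mul_of_nonneg_left
        (hbound _ hgood_diff εA hεApos.le (fun x hx => hj3 x hx) α (z j) hj1)
        (norm_nonneg _)
    have hsnorm : Summable (fun α : Fin n → ℕ =>
        ‖ξ (w j) α * multiDeriv α (fun x => f j x - g x) (z j) / (mfact α : ℂ)‖) :=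
      Summable.of_nonneg_of_le (fun _ => norm_nonneg _) hle hmaj
    calc ‖∑' α : Fin n → ℕ,
          ξ (w j) α * multiDeriv α (fun x => f j x - g x) (z j) / (mfact α : ℂ)‖
        ≤ ∑' α : Fin n → ℕ,
            ‖ξ (w j) α * multiDeriv α (fun x => f j x - g x) (z j) / (mfact α : ℂ)‖ :=
          norm_tsum_le_tsum_norm hsnorm
      _ ≤ ∑' α : Fin n → ℕ, ‖ξ (w j) α‖ * (εA * B ^ mdeg α) :=
          Summable.tsum_le_tsum hle hsnorm hmaj
      _ = εA * ∑' α : Fin n → ℕ, ‖ξ (w j) α‖ * B ^ mdeg α := by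
          rw [← Summable.tsum_mul_left _ (hmem (w j) (hw j) B hB)]
          exact tsum_congr fun α => by ring
      _ ≤ εA * C₁' := mul_le_mul_of_nonneg_left (hl₁ (w j) hj2a) hεApos.le
      _ ≤ ε/4 := by
          rw [hεAdef]
          rw [div_mul_eq_mul_div, div_le_div_iff₀ (by positivity) (by norm_num)]
          nlinarith [hC₁nn, hε.le]
  -- decompositions
  have hdecompj : (∑ α ∈ F, ξ (w j) α * multiDeriv α g (z j) / (mfact α : ℂ))
      + (∑' (α : ↥((F : Set (Fin n → ℕ))ᶜ)),
          ξ (w j) α.1 * multiDeriv (α.1) g (z j) / (mfact α.1 : ℂ))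
      = ∑' α : Fin n → ℕ, ξ (w j) α * multiDeriv α g (z j) / (mfact α : ℂ) :=
    Summable.sum_add_tsum_compl hSg2.1
  have hdecomp0 : (∑ α ∈ F, ξ w₀ α * multiDeriv α g z₀ / (mfact α : ℂ))
      + (∑' (α : ↥((F : Set (Fin n → ℕ))ᶜ)),
          ξ w₀ α.1 * multiDeriv (α.1) g z₀ / (mfact α.1 : ℂ))
      = ∑' α : Fin n → ℕ, ξ w₀ α * multiDeriv α g z₀ / (mfact α : ℂ) :=
    Summable.sum_add_tsum_compl hSg0.1
  have htailj := htail (w j) hj2b (z j) hj1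
  have htail0 := htail w₀ hw0mem z₀ hz₀R
  rw [dist_eq_norm]
  have hX : xiAct (ξ w₀) g z₀
      = ∑' α : Fin n → ℕ, ξ w₀ α * multiDeriv α g z₀ / (mfact α : ℂ) := rfl
  rw [hX, ← hdecomp0]
  rw [dist_eq_norm] at hj4
  calc ‖xiAct (ξ (w j)) (f j) (z j)
      - ((∑ α ∈ F, ξ w₀ α * multiDeriv α g z₀ / (mfact α : ℂ))
        + ∑' (α : ↥((F : Set (Fin n → ℕ))ᶜ)),
            ξ w₀ α.1 * multiDeriv (α.1) g z₀ / (mfact α.1 : ℂ))‖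
      = ‖(xiAct (ξ (w j)) (f j) (z j)
          - (∑' α : Fin n → ℕ, ξ (w j) α * multiDeriv α g (z j) / (mfact α : ℂ)))
        + (((∑ α ∈ F, ξ (w j) α * multiDeriv α g (z j) / (mfact α : ℂ))
            - ∑ α ∈ F, ξ w₀ α * multiDeriv α g z₀ / (mfact α : ℂ))
          + ((∑' (α : ↥((F : Set (Fin n → ℕ))ᶜ)),
                ξ (w j) α.1 * multiDeriv (α.1) g (z j) / (mfact α.1 : ℂ))
            - ∑' (α : ↥((F : Set (Fin n → ℕ))ᶜ)),
                ξ w₀ α.1 * multiDeriv (α.1) g z₀ / (mfact α.1 : ℂ)))‖ := by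
        rw [← hdecompj]
        congr 1
        ring
    _ ≤ ‖xiAct (ξ (w j)) (f j) (z j)
          - (∑' α : Fin n → ℕ, ξ (w j) α * multiDeriv α g (z j) / (mfact α : ℂ))‖
        + (‖(∑ α ∈ F, ξ (w j) α * multiDeriv α g (z j) / (mfact α : ℂ))
            - ∑ α ∈ F, ξ w₀ α * multiDeriv α g z₀ / (mfact α : ℂ)‖
          + (‖∑' (α : ↥((F : Set (Fin n → ℕ))ᶜ)),
                ξ (w j) α.1 * multiDeriv (α.1) g (z j) / (mfact α.1 : ℂ)‖
            + ‖∑' (α : ↥((F : Set (Fin n → ℕ))ᶜ)),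
                ξ w₀ α.1 * multiDeriv (α.1) g z₀ / (mfact α.1 : ℂ)‖)) := by
        refine le_trans (norm_add_le _ _) ?_
        gcongr
        exact le_trans (norm_add_le _ _) (by gcongr; exact norm_sub_le _ _)
    _ < ε/4 + (ε/4 + (ε/4 + ε/4)) := by
        apply add_lt_add_of_le_of_lt hAG
        apply add_lt_add_of_lt_of_lt hj4
        exact add_lt_add htailj htail0
    _ = ε := by ring
end
end

section
/- Let p ≤ q be positive integers and let A(w) = (a_{ij}(w)) be a p × q matrix of holomorphic functions on the polydisc Δᵐ ⊆ ℂᵐ. Let r := max_{w∈Δᵐ} rank A(w). Then there exist an open subset U ⊆ Δᵐ whose complement Δᵐ \ U is an analytic subset of Δᵐ, and a (p−r) × p matrix B(w) of holomorphic functions on Δᵐ, such that for every w ∈ U the sequence ℂ^q → ℂ^p → ℂ^{p−r} → 0 given by multiplication by A(w) and B(w) is exact, i.e., Im A(w) = Ker B(w) and B(w) is surjective. -/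
noncomputable section

open Submodule Module Matrix

lemma diffOn_prod {m : ℕ} {S : Set (Fin m → ℂ)} {ι : Type*} (u : Finset ι)
    (f : ι → (Fin m → ℂ) → ℂ) (h : ∀ i ∈ u, DifferentiableOn ℂ (f i) S) :
    DifferentiableOn ℂ (fun w => ∏ i ∈ u, f i w) S := by
  classical
  induction u using Finset.induction with
  | empty => simpa using differentiableOn_const 1
  | @insert a s hnot ih =>
    simp only [Finset.prod_insert hnot]
    exact (h a (Finset.mem_insert_self a s)).mul
      (ih fun i hi => h i (Finset.mem_insert_of_mem hi))

lemma diffOn_det {m n : ℕ} {S : Set (Fin m → ℂ)} {M : (Fin m → ℂ) → Matrix (Fin n) (Fin n) ℂ}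
    (h : ∀ i j, DifferentiableOn ℂ (fun w => M w i j) S) :
    DifferentiableOn ℂ (fun w => (M w).det) S := by
  simp only [Matrix.det_apply']
  exact DifferentiableOn.fun_sum fun σ _ =>
    (diffOn_prod Finset.univ _ fun i _ => h (σ i) i).const_mul _

lemma extract_cols {k n r : ℕ} (v : Fin n → (Fin k → ℂ))
    (hr : finrank ℂ (span ℂ (Set.range v)) = r) :
    ∃ g : Fin r → Fin n, LinearIndependent ℂ (fun t => v (g t)) := by
  classical
  obtain ⟨b, hbsub, hbspan, hbind⟩ := exists_linearIndependent ℂ (Set.range v)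
  have hfinb : b.Finite := Set.finite_coe_iff.mp hbind.finite
  haveI : Fintype b := hfinb.fintype
  have hcard : b.toFinset.card = r := by
    rw [← finrank_span_set_eq_card hbind, hbspan]; exact hr
  have hcard' : Fintype.card b = r := by rwa [← Set.toFinset_card]
  let eqv : b ≃ Fin r := Fintype.equivFinOfCardEq hcard'
  choose idx hidx using fun x : b => hbsub x.2
  refine ⟨fun t => idx (eqv.symm t), ?_⟩
  have : (fun t => v (idx (eqv.symm t))) = fun t => ((eqv.symm t : b) : Fin k → ℂ) := by
    funext t; exact hidx (eqv.symm t)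
  rw [this]
  exact hbind.comp eqv.symm eqv.symm.injective

lemma exists_det_ne_zero {p q r : ℕ} (A : Matrix (Fin p) (Fin q) ℂ) (h : A.rank = r) :
    ∃ (f : Fin r → Fin p) (g : Fin r → Fin q), ((A.submatrix f g).det ≠ 0) := by
  have h1 : finrank ℂ (span ℂ (Set.range Aᵀ)) = r := by
    have := Matrix.rank_eq_finrank_span_cols A; rw [h] at this; exact this.symm
  obtain ⟨g, hg⟩ := extract_cols Aᵀ h1
  set A₁ : Matrix (Fin p) (Fin r) ℂ := A.submatrix id g with hA₁
  have h2 : finrank ℂ (span ℂ (Set.range (fun i => A₁ i))) = r := by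
    have h3 : A₁.rank = r := by
      rw [Matrix.rank_eq_finrank_span_cols]
      have : A₁.col = fun t => Aᵀ (g t) := rfl
      rw [this, finrank_span_eq_card hg, Fintype.card_fin]
    have h4 := Matrix.rank_eq_finrank_span_cols A₁ᵀ
    rw [Matrix.rank_transpose, h3] at h4
    exact h4.symm
  obtain ⟨f, hf⟩ := extract_cols (fun i => A₁ i) h2
  refine ⟨f, g, ?_⟩
  have : A.submatrix f g = Matrix.of (fun s => A₁ (f s)) := rfl
  rw [this]
  have hunit : IsUnit (Matrix.of (fun s => A₁ (f s)) : Matrix (Fin r) (Fin r) ℂ) :=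
    Matrix.linearIndependent_rows_iff_isUnit.mp hf
  have := (Matrix.isUnit_iff_isUnit_det _).mp hunit
  exact this.ne_zero

/-- The unit polydisc in `ℂᵐ`. -/
def polydisc (m : ℕ) : Set (Fin m → ℂ) := {w | ∀ i, ‖w i‖ < 1}

/-- `S` is an analytic subset of `Δ`: the common zero set in `Δ` of a family of
functions holomorphic on `Δ`. -/
def AnalyticSubsetOf {m : ℕ} (S Δ : Set (Fin m → ℂ)) : Prop :=
  ∃ (ι : Type) (g : ι → (Fin m → ℂ) → ℂ), (∀ i, DifferentiableOn ℂ (g i) Δ) ∧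
    S = {w ∈ Δ | ∀ i, g i w = 0}

/-- For a `p × q` matrix `A(w)` of holomorphic functions on the polydisc with maximal rank `r`,
there is an open set `U` with analytic complement and a holomorphic `(p-r) × p` matrix `B(w)`
such that `ℂ^q → ℂ^p → ℂ^{p-r} → 0` is exact on `U`. -/
theorem statement8 {m p q r : ℕ} (hp : 0 < p) (hpq : p ≤ q)
    (A : (Fin m → ℂ) → Matrix (Fin p) (Fin q) ℂ)
    (hA : ∀ i j, DifferentiableOn ℂ (fun w => A w i j) (polydisc m))
    (hle : ∀ w ∈ polydisc m, (A w).rank ≤ r)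
    (hmax : ∃ w ∈ polydisc m, (A w).rank = r) :
    ∃ U : Set (Fin m → ℂ), IsOpen U ∧ U ⊆ polydisc m ∧
      AnalyticSubsetOf (polydisc m \ U) (polydisc m) ∧
      ∃ B : (Fin m → ℂ) → Matrix (Fin (p - r)) (Fin p) ℂ,
        (∀ k l, DifferentiableOn ℂ (fun w => B w k l) (polydisc m)) ∧
        ∀ w ∈ U, LinearMap.range (A w).mulVecLin = LinearMap.ker (B w).mulVecLin ∧
          Function.Surjective (B w).mulVecLin := by
  classical
  obtain ⟨w₀, hw₀, hw₀r⟩ := hmax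
  obtain ⟨f, g, hdet0⟩ := exists_det_ne_zero (A w₀) hw₀r
  have hrp : r ≤ p := by
    rw [← hw₀r]; simpa using (A w₀).rank_le_card_height
  have hfinj : Function.Injective f := by
    intro s s' hss'
    by_contra hne
    exact hdet0 (Matrix.det_zero_of_row_eq hne
      (by funext t; simp [Matrix.submatrix_apply, hss']))
  have hcard : Fintype.card {i : Fin p // i ∉ Set.range f} = p - r := by
    have h5 : Fintype.card {x : Fin p // x ∈ Set.range f} = r := by
      have h6 := Set.card_range_of_injective hfinj
      rwa [Fintype.card_fin] at h6
    rw [Fintype.card_subtype_compl, Fintype.card_fin, h5]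
  let eqv : {i : Fin p // i ∉ Set.range f} ≃ Fin (p - r) := Fintype.equivFinOfCardEq hcard
  set e : Fin (p - r) → Fin p := fun k => (eqv.symm k : Fin p) with he
  have he_inj : Function.Injective e := by
    intro a b hab
    have : eqv.symm a = eqv.symm b := Subtype.ext hab
    simpa using congrArg eqv this
  have he_not : ∀ k, e k ∉ Set.range f := fun k => (eqv.symm k).2
  set M : (Fin m → ℂ) → Matrix (Fin r) (Fin r) ℂ := fun w => (A w).submatrix f g with hM
  set d : (Fin m → ℂ) → ℂ := fun w => (M w).det with hd
  set P : Matrix (Fin (p - r)) (Fin p) ℂ := (1 : Matrix (Fin p) (Fin p) ℂ).submatrix e id with hP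
  set Q : Matrix (Fin r) (Fin p) ℂ := (1 : Matrix (Fin p) (Fin p) ℂ).submatrix f id with hQ
  set N : (Fin m → ℂ) → Matrix (Fin (p - r)) (Fin r) ℂ :=
    fun w => (A w).submatrix e g * (M w).adjugate with hN
  set B : (Fin m → ℂ) → Matrix (Fin (p - r)) (Fin p) ℂ :=
    fun w => d w • P - N w * Q with hB
  have hdiffM : ∀ i j, DifferentiableOn ℂ (fun w => M w i j) (polydisc m) :=
    fun i j => hA (f i) (g j)
  have hdiffd : DifferentiableOn ℂ d (polydisc m) := diffOn_det hdiffM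
  have hdiffadj : ∀ i j, DifferentiableOn ℂ (fun w => (M w).adjugate i j) (polydisc m) := by
    intro i j
    simp only [Matrix.adjugate_apply]
    apply diffOn_det
    intro i' j'
    rcases eq_or_ne i' j with h | h
    · simpa [Matrix.updateRow_apply, h] using differentiableOn_const _
    · simpa [Matrix.updateRow_apply, h] using hdiffM i' j'
  have hpoly_open : IsOpen (polydisc m) := by
    have hpd : polydisc m = Set.pi Set.univ (fun _ : Fin m => Metric.ball (0 : ℂ) 1) := by
      ext w; simp [polydisc, Set.mem_pi, Metric.mem_ball, dist_zero_right]
    rw [hpd]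
    exact isOpen_set_pi Set.finite_univ fun i _ => Metric.isOpen_ball
  refine ⟨polydisc m ∩ d ⁻¹' {0}ᶜ, ?_, Set.inter_subset_left, ?_, B, ?_, ?_⟩
  · exact hdiffd.continuousOn.isOpen_inter_preimage hpoly_open isOpen_compl_singleton
  · refine ⟨Unit, fun _ => d, fun _ => hdiffd, ?_⟩
    ext w
    simp only [Set.mem_diff, Set.mem_inter_iff, Set.mem_preimage, Set.mem_compl_iff,
      Set.mem_singleton_iff, Set.mem_setOf_eq]
    tauto
  · intro k l
    have hBkl : (fun w => B w k l) = fun w =>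
        d w * P k l - ∑ s, ((∑ t, A w (e k) (g t) * (M w).adjugate t s) * Q s l) := by
      funext w
      simp [hB, hN, Matrix.sub_apply, Matrix.smul_apply, Matrix.mul_apply, smul_eq_mul,
        Matrix.submatrix_apply]
    rw [hBkl]
    apply DifferentiableOn.sub
    · exact hdiffd.mul (differentiableOn_const _)
    · apply DifferentiableOn.fun_sum
      intro s _
      apply DifferentiableOn.mul _ (differentiableOn_const _)
      apply DifferentiableOn.fun_sum
      intro t _
      exact (hA (e k) (g t)).mul (hdiffadj t s)
  · rintro w ⟨hw, hdw⟩
    have hdne : d w ≠ 0 := hdw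
    have hMunit : IsUnit (M w) :=
      (Matrix.isUnit_iff_isUnit_det _).mpr (isUnit_iff_ne_zero.mpr hdne)
    -- columns indexed by g are linearly independent
    have hcols : LinearIndependent ℂ (fun t => (A w)ᵀ (g t)) := by
      rw [Fintype.linearIndependent_iff]
      intro c hc
      have hinj := Matrix.mulVec_injective_iff_isUnit.mpr hMunit
      have h0 : (M w).mulVec c = (M w).mulVec 0 := by
        rw [Matrix.mulVec_zero]
        funext s
        have hfs := congrFun hc (f s)
        simp only [Finset.sum_apply, Pi.smul_apply, smul_eq_mul, Pi.zero_apply,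
          Matrix.transpose_apply] at hfs
        simp only [Matrix.mulVec, dotProduct, hM, Matrix.submatrix_apply, Pi.zero_apply]
        simpa [mul_comm] using hfs
      have hc0 := hinj h0
      intro t; exact congrFun hc0 t
    -- span of these columns is the range of A w
    have hspan : Submodule.span ℂ (Set.range fun t => (A w)ᵀ (g t))
        = LinearMap.range (A w).mulVecLin := by
      apply Submodule.eq_of_le_of_finrank_le
      · rw [Submodule.span_le]
        rintro x ⟨t, rfl⟩
        exact ⟨Pi.single (g t) 1, by
          funext i; simp [Matrix.mulVec_single, Matrix.transpose_apply]⟩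
      · rw [finrank_span_eq_card hcols, Fintype.card_fin]
        exact hle w hw
    -- key matrix identities
    have hPA : P * ((A w).submatrix id g) = (A w).submatrix e g := by
      ext k t
      simp [hP, Matrix.mul_apply, Matrix.one_apply, Matrix.submatrix_apply, ite_mul,
        one_mul, zero_mul, Finset.sum_ite_eq]
    have hQA : Q * ((A w).submatrix id g) = M w := by
      ext s t
      simp [hQ, hM, Matrix.mul_apply, Matrix.one_apply, Matrix.submatrix_apply, ite_mul,
        one_mul, zero_mul, Finset.sum_ite_eq]
    have hBA : B w * ((A w).submatrix id g) = 0 := by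
      rw [hB]
      show (d w • P - N w * Q) * ((A w).submatrix id g) = 0
      rw [Matrix.sub_mul, Matrix.smul_mul, hPA, Matrix.mul_assoc, hQA, hN]
      show d w • (A w).submatrix e g - (A w).submatrix e g * (M w).adjugate * M w = 0
      rw [Matrix.mul_assoc, Matrix.adjugate_mul, Matrix.mul_smul, Matrix.mul_one, sub_self]
    have hAe : ∀ t, (A w)ᵀ (g t) = ((A w).submatrix id g).mulVec (Pi.single t 1) := by
      intro t; funext i
      simp [Matrix.mulVec_single, Matrix.submatrix_apply, Matrix.transpose_apply]
    have hrle : LinearMap.range (A w).mulVecLin ≤ LinearMap.ker (B w).mulVecLin := by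
      rw [← hspan, Submodule.span_le]
      rintro x ⟨t, rfl⟩
      simp only [SetLike.mem_coe, LinearMap.mem_ker, Matrix.mulVecLin_apply]
      rw [hAe t, Matrix.mulVec_mulVec, hBA, Matrix.zero_mulVec]
    -- mulVec formula for B
    have hPv : ∀ v : Fin p → ℂ, P.mulVec v = fun k => v (e k) := by
      intro v; funext k
      simp [hP, Matrix.mulVec, dotProduct, Matrix.submatrix_apply, Matrix.one_apply,
        ite_mul, one_mul, zero_mul, Finset.sum_ite_eq]
    have hQv : ∀ v : Fin p → ℂ, Q.mulVec v = fun s => v (f s) := by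
      intro v; funext s
      simp [hQ, Matrix.mulVec, dotProduct, Matrix.submatrix_apply, Matrix.one_apply,
        ite_mul, one_mul, zero_mul, Finset.sum_ite_eq]
    have hBv : ∀ v : Fin p → ℂ, (B w).mulVec v =
        fun k => d w * v (e k) - (N w).mulVec (fun s => v (f s)) k := by
      intro v
      rw [hB]
      show ((d w • P - N w * Q).mulVec v) = _
      funext k
      rw [Matrix.sub_mulVec]
      simp only [Pi.sub_apply]
      congr 1
      · rw [Matrix.smul_mulVec, hPv v]; simp
      · rw [← Matrix.mulVec_mulVec, hQv v]
    have hsurj : Function.Surjective (B w).mulVecLin := by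
      intro y
      refine ⟨fun l => ∑ k', if e k' = l then (d w)⁻¹ * y k' else 0, ?_⟩
      rw [Matrix.mulVecLin_apply, hBv]
      funext k
      have h1 : (fun s => (∑ k', if e k' = f s then (d w)⁻¹ * y k' else 0))
          = (0 : Fin r → ℂ) := by
        funext s
        apply Finset.sum_eq_zero
        intro k' _
        exact if_neg fun hcontra => he_not k' ⟨s, hcontra.symm⟩
      have h2 : (∑ k', if e k' = e k then (d w)⁻¹ * y k' else 0) = (d w)⁻¹ * y k := by
        rw [Finset.sum_eq_single k]
        · simp
        · intro k' _ hne; exact if_neg fun hc => hne (he_inj hc)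
        · intro hk; exact absurd (Finset.mem_univ k) hk
      rw [h1, h2, Matrix.mulVec_zero, Pi.zero_apply, sub_zero, mul_inv_cancel_left₀ hdne]
    have hker : finrank ℂ (LinearMap.ker (B w).mulVecLin) = r := by
      have h1 := LinearMap.finrank_range_add_finrank_ker (B w).mulVecLin
      rw [LinearMap.range_eq_top.mpr hsurj, finrank_top, Module.finrank_fintype_fun_eq_card,
        Module.finrank_fintype_fun_eq_card, Fintype.card_fin, Fintype.card_fin] at h1
      omega
    have hrangefr : finrank ℂ (LinearMap.range (A w).mulVecLin) = r := by
      rw [← hspan, finrank_span_eq_card hcols, Fintype.card_fin]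
    exact ⟨Submodule.eq_of_le_of_finrank_le hrle (by rw [hker, hrangefr]), hsurj⟩
end
end
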